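/- Let f be a unit of R. Assume that every a ∈ A with a ≠ 0 dominates every element of the form b·f^{-i} with b ∈ A and i ≥ 1; that is, {n : a(n) = 0} is finite and |b(n)·f(n)^{-i}|_n / |a(n)|_n → 0 as n → ∞. Then f is transcendental over A: for all a_0, a_1, …, a_m ∈ A, if ∑_{i=0}^m a_i·f^i = 0 in R, then a_0 = a_1 = … = a_m = 0. -/

import Mathlib

open Filter

lemma top_zero_aux
    {R : ℕ → Type*} [∀ n, CommRing (R n)] [∀ n, IsDomain (R n)]
    (v : ∀ n, AbsoluteValue (R n) ℝ) (A : Subring (∀ n, R n))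
    (f : (∀ n, R n)ˣ)
    (hdom : ∀ a ∈ A, a ≠ (0 : ∀ n, R n) → ∀ b ∈ A, ∀ i : ℕ, 1 ≤ i →
      {n : ℕ | a n = 0}.Finite ∧
      Tendsto
        (fun n => v n (b n * (((f⁻¹ : (∀ n, R n)ˣ) : ∀ n, R n) ^ i) n) / v n (a n))
        atTop (nhds 0))
    (m : ℕ) (hm : 1 ≤ m) (a : ℕ → ∀ n, R n) (ha : ∀ i, a i ∈ A)
    (hsum : (∑ i ∈ Finset.range (m + 1), a i * ((f : ∀ n, R n)) ^ i) = 0) :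
    a m = 0 := by
  by_contra hne
  set F : ∀ n, R n := (f : ∀ n, R n) with hF
  set g : ∀ n, R n := ((f⁻¹ : (∀ n, R n)ˣ) : ∀ n, R n) with hg
  have hfg : F * g = 1 := f.mul_inv
  have key : a m = ∑ i ∈ Finset.range m, (-(a i)) * g ^ (m - i) := by
    have h1 : ∑ i ∈ Finset.range m, a i * F ^ i + a m * F ^ m = 0 := by
      rw [← Finset.sum_range_succ]; exact hsum
    have h2 : a m * F ^ m = ∑ i ∈ Finset.range m, (-(a i)) * F ^ i := by
      have h3 : a m * F ^ m = -∑ i ∈ Finset.range m, a i * F ^ i :=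
        eq_neg_of_add_eq_zero_right h1
      rw [h3, ← Finset.sum_neg_distrib]
      simp [neg_mul]
    have hpow : F ^ m * g ^ m = 1 := by rw [← mul_pow, hfg, one_pow]
    calc a m = a m * (F ^ m * g ^ m) := by rw [hpow, mul_one]
      _ = (a m * F ^ m) * g ^ m := by ring
      _ = (∑ i ∈ Finset.range m, (-(a i)) * F ^ i) * g ^ m := by rw [h2]
      _ = ∑ i ∈ Finset.range m, (-(a i)) * (F ^ i * g ^ m) := by
            rw [Finset.sum_mul]; apply Finset.sum_congr rfl; intro i _; ring
      _ = ∑ i ∈ Finset.range m, (-(a i)) * g ^ (m - i) := by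
            apply Finset.sum_congr rfl
            intro i hi
            have hi' : i ≤ m := le_of_lt (Finset.mem_range.mp hi)
            have : F ^ i * g ^ m = g ^ (m - i) := by
              have hmi : m = i + (m - i) := by omega
              rw [hmi, pow_add, ← mul_assoc, ← mul_pow, hfg, one_pow, one_mul]
              congr 1
              omega
            rw [this]
  have keyn : ∀ n, a m n = ∑ i ∈ Finset.range m, (-(a i)) n * (g ^ (m - i)) n := by
    intro n
    rw [key]
    simp [Finset.sum_apply]
  have H : ∀ i ∈ Finset.range m,
      Tendsto (fun n => v n ((-(a i)) n * (g ^ (m - i)) n) / v n (a m n)) atTop (nhds 0) := by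
    intro i hi
    have hi' : i < m := Finset.mem_range.mp hi
    exact (hdom (a m) (ha m) hne (-(a i)) (A.neg_mem (ha i)) (m - i) (by omega)).2
  have hfin : {n : ℕ | a m n = 0}.Finite :=
    (hdom (a m) (ha m) hne (a 0) (ha 0) 1 le_rfl).1
  have htend : Tendsto
      (fun n => ∑ i ∈ Finset.range m, v n ((-(a i)) n * (g ^ (m - i)) n) / v n (a m n))
      atTop (nhds 0) := by
    have := tendsto_finset_sum (Finset.range m) H
    simpa using this
  have hev : ∀ᶠ n in atTop, a m n ≠ 0 := by
    rw [← Nat.cofinite_eq_atTop]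
    exact Set.Finite.eventually_cofinite_notMem hfin
  have hge : ∀ᶠ n in atTop,
      1 ≤ ∑ i ∈ Finset.range m, v n ((-(a i)) n * (g ^ (m - i)) n) / v n (a m n) := by
    filter_upwards [hev] with n hn
    have hpos : 0 < v n (a m n) := (v n).pos hn
    have hle : v n (a m n) ≤ ∑ i ∈ Finset.range m, v n ((-(a i)) n * (g ^ (m - i)) n) := by
      rw [keyn n]
      exact (v n).sum_le _ _
    rw [← Finset.sum_div]
    exact (one_le_div hpos).mpr hle
  have hlt : ∀ᶠ n in atTop,
      (∑ i ∈ Finset.range m, v n ((-(a i)) n * (g ^ (m - i)) n) / v n (a m n)) < 1 :=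
    htend.eventually (gt_mem_nhds (by norm_num))
  obtain ⟨n, h1, h2⟩ := (hge.and hlt).exists
  linarith

/-- Let `f` be a unit of `R = ∏ n, R n`.  If every nonzero `a ∈ A` dominates every element
`b * f⁻ⁱ` with `b ∈ A` and `i ≥ 1` (i.e. `a` vanishes at finitely many coordinates and
`|b n * (f⁻¹ n)^i|_n / |a n|_n → 0`), then `f` is transcendental over `A`: any vanishing
polynomial relation `∑ i, a i * f ^ i = 0` with coefficients in `A` has all coefficients
zero. -/
theorem transcendental_of_dominates
    {R : ℕ → Type*} [∀ n, CommRing (R n)] [∀ n, IsDomain (R n)]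
    (v : ∀ n, AbsoluteValue (R n) ℝ) (A : Subring (∀ n, R n))
    (f : (∀ n, R n)ˣ)
    (hdom : ∀ a ∈ A, a ≠ (0 : ∀ n, R n) → ∀ b ∈ A, ∀ i : ℕ, 1 ≤ i →
      {n : ℕ | a n = 0}.Finite ∧
      Tendsto
        (fun n => v n (b n * (((f⁻¹ : (∀ n, R n)ˣ) : ∀ n, R n) ^ i) n) / v n (a n))
        atTop (nhds 0)) :
    ∀ (m : ℕ) (a : ℕ → ∀ n, R n), (∀ i, a i ∈ A) →
      (∑ i ∈ Finset.range (m + 1), a i * ((f : ∀ n, R n)) ^ i) = 0 →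
      ∀ i ≤ m, a i = 0 := by
  intro m
  induction m with
  | zero =>
    intro a ha hs i hi
    interval_cases i
    simpa using hs
  | succ m ih =>
    intro a ha hs i hi
    have htop : a (m + 1) = 0 :=
      top_zero_aux v A f hdom (m + 1) (by omega) a ha hs
    have hs' : (∑ i ∈ Finset.range (m + 1), a i * ((f : ∀ n, R n)) ^ i) = 0 := by
      rw [Finset.sum_range_succ, htop] at hs
      simpa using hs
    rcases Nat.eq_or_lt_of_le hi with h | h
    · rw [h]; exact htop
    · exact ih a ha hs' i (by omega)
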